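/- Let p be a stochastic tournament on a finite set V with |V| = n ≥ 3 and let ε > 0. Suppose the number of unbalanced unordered triangles of p (3-element subsets {x, y, z} of V with p x y * p y z * p z x ≠ p x z * p z y * p y x) is at most ε * C(n, 3). Then there exists a reversible stochastic tournament p' on V such that the number of unordered pairs {x, y} of distinct vertices with p' x y ≠ p x y is strictly less than ε * C(n, 2). -/

import Mathlib

/-- If a stochastic tournament `p` has at most `ε * C(n, 3)` unbalanced
unordered triangles, then there is a reversible stochastic tournament `p'`
differing from `p` on strictly fewer than `ε * C(n, 2)` unordered pairs. -/
theorem few_unbalanced_implies_close_to_reversible {V : Type*} [Fintype V] [DecidableEq V]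
    (p : V → V → ℝ)
    (hp : ∀ x y : V, x ≠ y → 0 < p x y ∧ p x y < 1 ∧ p x y + p y x = 1)
    (n : ℕ) (hn : Fintype.card V = n) (hn3 : 3 ≤ n)
    (ε : ℝ) (hε : 0 < ε)
    (hfew : ({T : Finset V | ∃ x y z : V, x ≠ y ∧ x ≠ z ∧ y ≠ z ∧
        T = {x, y, z} ∧
        p x y * p y z * p z x ≠ p x z * p z y * p y x}.ncard : ℝ) ≤
      ε * (n.choose 3 : ℝ)) :
    ∃ p' : V → V → ℝ,
      (∀ x y : V, x ≠ y → 0 < p' x y ∧ p' x y < 1 ∧ p' x y + p' y x = 1) ∧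
      (∃ π : V → ℝ, (∀ x, 0 < π x) ∧ (∑ x, π x) = 1 ∧
        ∀ x y : V, x ≠ y → π x * p' x y = π y * p' y x) ∧
      ({e : Finset V | ∃ x y : V, x ≠ y ∧ e = {x, y} ∧
        p' x y ≠ p x y}.ncard : ℝ) < ε * (n.choose 2 : ℝ) := by
  classical
  have hpos : ∀ x y : V, x ≠ y → 0 < p x y := fun x y h => (hp x y h).1
  have hsum : ∀ x y : V, x ≠ y → p x y + p y x = 1 := fun x y h => (hp x y h).2.2
  -- The finset of unbalanced triangles
  set B : Finset (Finset V) := Finset.univ.filter (fun T => ∃ x y z : V,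
      x ≠ y ∧ x ≠ z ∧ y ≠ z ∧ T = {x, y, z} ∧
      p x y * p y z * p z x ≠ p x z * p z y * p y x) with hB
  have hBset : {T : Finset V | ∃ x y z : V, x ≠ y ∧ x ≠ z ∧ y ≠ z ∧
      T = {x, y, z} ∧ p x y * p y z * p z x ≠ p x z * p z y * p y x} = ↑B := by
    ext T; simp [hB]
  rw [hBset, Set.ncard_coe_finset] at hfew
  -- every unbalanced triangle has 3 elements
  have hcard3 : ∀ T ∈ B, T.card = 3 := by
    intro T hT
    rw [hB, Finset.mem_filter] at hT
    obtain ⟨-, x, y, z, hxy, hxz, hyz, rfl, -⟩ := hT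
    exact Finset.card_eq_three.mpr ⟨x, y, z, hxy, hxz, hyz, rfl⟩
  -- double counting: ∑_v #{unbalanced triangles containing v} = 3 * B.card
  have hsum3 : (∑ v : V, (B.filter (fun T => v ∈ T)).card) = 3 * B.card := by
    calc (∑ v : V, (B.filter (fun T => v ∈ T)).card)
        = ∑ v : V, ∑ T ∈ B, if v ∈ T then 1 else 0 := by
          simp only [Finset.card_filter]
      _ = ∑ T ∈ B, ∑ v : V, if v ∈ T then 1 else 0 := Finset.sum_comm
      _ = ∑ T ∈ B, T.card := by
          refine Finset.sum_congr rfl fun T hT => ?_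
          rw [Finset.sum_ite_mem, Finset.univ_inter, Finset.card_eq_sum_ones]
      _ = ∑ T ∈ B, 3 := Finset.sum_congr rfl hcard3
      _ = 3 * B.card := by rw [Finset.sum_const, smul_eq_mul, mul_comm]
  -- choose a vertex in few unbalanced triangles
  have hne : (Finset.univ : Finset V).Nonempty := by
    rw [← Finset.card_pos, Finset.card_univ, hn]; omega
  obtain ⟨v, -, hv⟩ := Finset.exists_le_of_sum_le (f := fun v : V =>
      n * (B.filter (fun T => v ∈ T)).card) (g := fun _ => 3 * B.card) hne
    (by
      rw [Finset.sum_const, Finset.card_univ, hn, ← Finset.mul_sum, hsum3, smul_eq_mul])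
  set N : ℕ := (B.filter (fun T => v ∈ T)).card with hN
  -- the candidate stationary distribution (unnormalized)
  set π : V → ℝ := fun x => if x = v then 1 else p v x / p x v with hπ
  have hπpos : ∀ x, 0 < π x := by
    intro x
    by_cases hx : x = v
    · simp [hπ, hx]
    · simp only [hπ, if_neg hx]
      exact div_pos (hpos v x (Ne.symm hx)) (hpos x v hx)
  set p' : V → V → ℝ := fun x y => π y / (π x + π y) with hp'
  have hadd : ∀ x y : V, 0 < π x + π y := fun x y => add_pos (hπpos x) (hπpos y)
  -- p' agrees with p on pairs containing v
  have hagreev : ∀ y : V, y ≠ v → p' v y = p v y ∧ p' y v = p y v := by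
    intro y hy
    have h1 : 0 < p v y := hpos v y (Ne.symm hy)
    have h2 : 0 < p y v := hpos y v hy
    have h3 : p v y + p y v = 1 := hsum v y (Ne.symm hy)
    have hπv : π v = 1 := by simp [hπ]
    have hπy : π y = p v y / p y v := by simp [hπ, hy]
    constructor
    · rw [hp']
      simp only [hπv, hπy]
      rw [div_eq_iff (by positivity)]
      field_simp
      nlinarith [h1, h2, h3]
    · rw [hp']
      simp only [hπv, hπy]
      rw [div_eq_iff (by positivity)]
      field_simp
      nlinarith [h1, h2, h3]
  -- p' agrees with p on balanced pairs not containing v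
  have hagree : ∀ x y : V, x ≠ y → x ≠ v → y ≠ v →
      p v x * p x y * p y v = p v y * p y x * p x v → p' x y = p x y := by
    intro x y hxy hxv hyv hbal
    have ha : 0 < p v x := hpos v x (Ne.symm hxv)
    have ha' : 0 < p x v := hpos x v hxv
    have hb : 0 < p v y := hpos v y (Ne.symm hyv)
    have hb' : 0 < p y v := hpos y v hyv
    have hc' : 0 < p y x := hpos y x (Ne.symm hxy)
    have hcc : p x y + p y x = 1 := hsum x y hxy
    have hπx : π x = p v x / p x v := by simp [hπ, hxv]
    have hπy : π y = p v y / p y v := by simp [hπ, hyv]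
    rw [hp']
    simp only [hπx, hπy]
    rw [div_eq_iff (by
      have := div_pos ha ha'
      have := div_pos hb hb'
      positivity)]
    field_simp
    linear_combination (-(p y v)) * hbal - p v y * p x v * p y v * hcc - (1 - p y v) * hbal - (1 - p y v) * p v y * p x v * hcc
  -- now bound the set of changed pairs
  set S' : Set (Finset V) := {e : Finset V | ∃ x y : V, x ≠ y ∧ e = {x, y} ∧
      p' x y ≠ p x y} with hS'
  have hkey : ∀ e ∈ S', v ∉ e ∧ insert v e ∈ B.filter (fun T => v ∈ T) := by
    intro e he
    obtain ⟨x, y, hxy, rfl, hne'⟩ := he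
    have hxv : x ≠ v := by
      rintro rfl
      exact hne' (hagreev y (fun h => hxy h.symm)).1
    have hyv : y ≠ v := by
      rintro rfl
      exact hne' (hagreev x hxy).2
    have hvnot : v ∉ ({x, y} : Finset V) := by
      simp [Ne.symm hxv, Ne.symm hyv]
    refine ⟨hvnot, ?_⟩
    rw [Finset.mem_filter]
    constructor
    · rw [hB, Finset.mem_filter]
      refine ⟨Finset.mem_univ _, v, x, y, Ne.symm hxv, Ne.symm hyv, hxy, rfl, ?_⟩
      intro hbal
      exact hne' (hagree x y hxy hxv hyv hbal)
    · exact Finset.mem_insert_self _ _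
  have hScount : S'.ncard ≤ N := by
    have hinj : Set.InjOn (insert v) S' := by
      intro e1 h1 e2 h2 h
      rw [← Finset.erase_insert (hkey e1 h1).1, h, Finset.erase_insert (hkey e2 h2).1]
    have hsub : (insert v) '' S' ⊆ ↑(B.filter (fun T => v ∈ T)) := by
      rintro _ ⟨e, he, rfl⟩
      exact (hkey e he).2
    calc S'.ncard = ((insert v) '' S').ncard := (Set.ncard_image_of_injOn hinj).symm
      _ ≤ (↑(B.filter (fun T => v ∈ T)) : Set (Finset V)).ncard :=
          Set.ncard_le_ncard hsub (Finset.finite_toSet _)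
      _ = N := Set.ncard_coe_finset _
  -- assemble the result
  set S : ℝ := ∑ x, π x with hS
  have hSpos : 0 < S := Finset.sum_pos (fun x _ => hπpos x) hne
  refine ⟨p', ?_, ⟨fun x => π x / S, fun x => div_pos (hπpos x) hSpos, ?_, ?_⟩, ?_⟩
  · intro x y hxy
    refine ⟨div_pos (hπpos y) (hadd x y), ?_, ?_⟩
    · rw [hp', div_lt_one (hadd x y)]
      simpa using (hπpos x)
    · rw [hp']
      simp only
      rw [div_add_div _ _ (ne_of_gt (hadd x y)) (ne_of_gt (hadd y x))]
      rw [div_eq_one_iff_eq (mul_pos (hadd x y) (hadd y x)).ne']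
      ring
  · rw [← Finset.sum_div, ← hS, div_self (ne_of_gt hSpos)]
  · intro x y _
    rw [hp']
    simp only
    rw [div_mul_div_comm, div_mul_div_comm, add_comm (π y) (π x), mul_comm (π x) (π y)]
  · -- counting
    have h1 : (S'.ncard : ℝ) ≤ (N : ℝ) := Nat.cast_le.mpr hScount
    have h2 : (n : ℝ) * N ≤ 3 * B.card := by exact_mod_cast hv
    have hch : (n.choose 3 : ℝ) * 3 = (n.choose 2 : ℝ) * ((n : ℝ) - 2) := by
      have h2n : (2 : ℕ) ≤ n := by omega
      have h := Nat.choose_succ_right_eq n 2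
      have h' : ((n.choose 3 * 3 : ℕ) : ℝ) = ((n.choose 2 * (n - 2) : ℕ) : ℝ) := by
        exact_mod_cast h
      rw [Nat.cast_mul, Nat.cast_mul, Nat.cast_sub h2n] at h'
      push_cast at h'
      linarith
    have hc2 : (0 : ℝ) < (n.choose 2 : ℝ) := by
      exact_mod_cast Nat.choose_pos (by omega : 2 ≤ n)
    have hnpos : (0 : ℝ) < (n : ℝ) := by positivity
    have hn2 : ((n : ℝ) - 2) < (n : ℝ) := by linarith
    have : (n : ℝ) * (S'.ncard : ℝ) < (n : ℝ) * (ε * (n.choose 2 : ℝ)) := by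
      calc (n : ℝ) * (S'.ncard : ℝ) ≤ (n : ℝ) * (N : ℝ) := by
            exact mul_le_mul_of_nonneg_left h1 (le_of_lt hnpos)
        _ ≤ 3 * B.card := h2
        _ ≤ 3 * (ε * (n.choose 3 : ℝ)) := by linarith [hfew]
        _ = ε * ((n.choose 3 : ℝ) * 3) := by ring
        _ = ε * ((n.choose 2 : ℝ) * ((n : ℝ) - 2)) := by rw [hch]
        _ < ε * ((n.choose 2 : ℝ) * (n : ℝ)) := by
            apply mul_lt_mul_of_pos_left _ hε
            exact mul_lt_mul_of_pos_left hn2 hc2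
        _ = (n : ℝ) * (ε * (n.choose 2 : ℝ)) := by ring
    exact lt_of_mul_lt_mul_left this (le_of_lt hnpos)
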